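/- Let G = (V, E, ℓ) be an edge-labeled directed graph with finite label set L, let d ∈ V have at least one neighbor (some k with (d,k) ∈ E or (k,d) ∈ E), and let G' = (V', E', ℓ') = 𝒟_d(G). Fix a probability function p : L → [0,1] with Σ_{a∈L} p(a) = 1 and with at least two labels a ≠ b satisfying p(a) > 0 and p(b) > 0. With P(G_r) = Π_{e∈E} p(ℓ_r(e)) for labelings ℓ_r : E → L and P(G'_s) = Π_{e∈E'} p(ℓ'_s(e)) for labelings ℓ'_s : E' → L, the inequality is strict: Σ_r P(G_r) 𝙳(G_r) < Σ_s P(G'_s) 𝙳(G'_s). -/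

import Mathlib

namespace GeneDup

variable {α L : Type*}

/-- An edge-labeled directed graph: a finite vertex set `V`, a set of directed
edges `E ⊆ V × V`, and a labeling of edges (given as a total function whose
values only matter on `E`). -/
structure LGraph (α L : Type*) where
  V : Finset α
  E : Finset (α × α)
  edge_mem : ∀ e ∈ E, e.1 ∈ V ∧ e.2 ∈ V
  lab : α → α → L

/-- `k` is a distinguisher of `i` and `j`. -/
def IsDistinguisher (G : LGraph α L) (i j k : α) : Prop :=
  ((i, k) ∈ G.E ∧ (j, k) ∈ G.E ∧ G.lab i k ≠ G.lab j k) ∨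
  ((k, i) ∈ G.E ∧ (k, j) ∈ G.E ∧ G.lab k i ≠ G.lab k j)

/-- `i` and `j` are distinguishable in `G`. -/
def Distinguishable (G : LGraph α L) (i j : α) : Prop :=
  ∃ k, IsDistinguisher G i j k

/-- `U ⊆ V` is a distinguishable set in `G`. -/
def IsDistSet (G : LGraph α L) (U : Set α) : Prop :=
  U ⊆ (G.V : Set α) ∧ ∀ i ∈ U, ∀ j ∈ U, i ≠ j → Distinguishable G i j

/-- The distinguishability of `G`: the maximum size of a distinguishable set. -/
noncomputable def dnum (G : LGraph α L) : ℕ :=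
  sSup {n | ∃ U : Finset α, IsDistSet G (↑U) ∧ U.card = n}

/-- Vertex duplication of `d`, with `d'` the new (duplicate) vertex. -/
def dup [DecidableEq α] (G : LGraph α L) (d d' : α) : LGraph α L where
  V := insert d' G.V
  E := (insert d' G.V ×ˢ insert d' G.V).filter
    (fun e => ((if e.1 = d' then d else e.1), (if e.2 = d' then d else e.2)) ∈ G.E)
  edge_mem := by
    intro e he
    exact Finset.mem_product.mp (Finset.mem_filter.mp he).1
  lab := fun i j => G.lab (if i = d' then d else i) (if j = d' then d else j)

/-- `H` is a subgraph of `G`. -/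
def IsSubgraph (H G : LGraph α L) : Prop :=
  H.V ⊆ G.V ∧ H.E ⊆ G.E ∧ ∀ e ∈ H.E, H.lab e.1 e.2 = G.lab e.1 e.2

/-- A graph homomorphism from `G'` to `G`. -/
def IsHom (G' G : LGraph α L) (Φ : α → α) : Prop :=
  (∀ v ∈ G'.V, Φ v ∈ G.V) ∧
  ∀ i j, (i, j) ∈ G'.E → (Φ i, Φ j) ∈ G.E ∧ G'.lab i j = G.lab (Φ i) (Φ j)

/-- One evolutionary step: passing to a subgraph, or duplicating a vertex. -/
def EvolStep [DecidableEq α] (G H : LGraph α L) : Prop :=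
  IsSubgraph H G ∨ ∃ d d', d ∈ G.V ∧ d' ∉ G.V ∧ H = dup G d d'

/-- `G` is an ancestor of `G'`. -/
def Ancestor [DecidableEq α] (G G' : LGraph α L) : Prop :=
  Relation.ReflTransGen EvolStep G G'


/-- The graph `G` with its edges relabeled according to `f`. -/
def relabel [DecidableEq α] (G : LGraph α L) (f : {e // e ∈ G.E} → L) : LGraph α L where
  V := G.V
  E := G.E
  edge_mem := G.edge_mem
  lab := fun i j => if h : (i, j) ∈ G.E then f ⟨(i, j), h⟩ else G.lab i j

/-- The probability `P(G_f) = ∏_{e ∈ E} p(f(e))` of the labeling `f` of the edges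
of `G`, where each edge is labeled independently with distribution `p`. -/
noncomputable def labProb (p : L → ℝ) (G : LGraph α L) (f : {e // e ∈ G.E} → L) : ℝ :=
  ∏ e, p (f e)


section Aux

variable {α L : Type*}

/-- The set of cardinalities of distinguishable sets. -/
def distCards (G : LGraph α L) : Set ℕ :=
  {n | ∃ U : Finset α, IsDistSet G (↑U) ∧ U.card = n}

lemma distCards_nonempty (G : LGraph α L) : (distCards G).Nonempty :=
  ⟨0, ∅, ⟨by simp, by simp⟩, by simp⟩

lemma distCards_bddAbove (G : LGraph α L) : BddAbove (distCards G) := by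
  refine ⟨G.V.card, ?_⟩
  rintro n ⟨U, hU, rfl⟩
  exact Finset.card_le_card (Finset.coe_subset.mp hU.1)

lemma dnum_eq_sSup (G : LGraph α L) : dnum G = sSup (distCards G) := rfl

lemma le_dnum (G : LGraph α L) (U : Finset α) (h : IsDistSet G (↑U)) :
    U.card ≤ dnum G :=
  le_csSup (distCards_bddAbove G) ⟨U, h, rfl⟩

lemma dnum_mono {H G : LGraph α L} (hV : H.V ⊆ G.V) (hE : H.E ⊆ G.E)
    (hlab : ∀ e ∈ H.E, H.lab e.1 e.2 = G.lab e.1 e.2) : dnum H ≤ dnum G := by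
  have hmem : dnum H ∈ distCards H :=
    Nat.sSup_mem (distCards_nonempty H) (distCards_bddAbove H)
  obtain ⟨U, hU, hcard⟩ := hmem
  rw [← hcard]
  refine le_dnum G U ⟨hU.1.trans (Finset.coe_subset.mpr hV), ?_⟩
  intro i hi j hj hij
  obtain ⟨k, hk⟩ := hU.2 i hi j hj hij
  refine ⟨k, ?_⟩
  rcases hk with ⟨h1, h2, h3⟩ | ⟨h1, h2, h3⟩
  · exact Or.inl ⟨hE h1, hE h2, by
      rw [← hlab (i, k) h1, ← hlab (j, k) h2]; exact h3⟩
  · exact Or.inr ⟨hE h1, hE h2, by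
      rw [← hlab (k, i) h1, ← hlab (k, j) h2]; exact h3⟩

variable [DecidableEq α]

lemma sub_dup (G : LGraph α L) (d d' : α) (hd' : d' ∉ G.V) :
    G.E ⊆ (dup G d d').E := by
  intro e he
  obtain ⟨h1, h2⟩ := G.edge_mem e he
  have n1 : e.1 ≠ d' := fun h => hd' (h ▸ h1)
  have n2 : e.2 ≠ d' := fun h => hd' (h ▸ h2)
  simp [dup, Finset.mem_filter, Finset.mem_product, n1, n2, h1, h2, he]

/-- Combine a labeling of `G.E` with a labeling of the new edges into a
labeling of `G2.E`. -/
def combine (G G2 : LGraph α L) (f : {e // e ∈ G.E} → L)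
    (h : {e // e ∈ G2.E \ G.E} → L) : {e // e ∈ G2.E} → L :=
  fun x => if hx : x.1 ∈ G.E then f ⟨x.1, hx⟩
    else h ⟨x.1, Finset.mem_sdiff.mpr ⟨x.2, hx⟩⟩

def combineEquiv (G G2 : LGraph α L) (hs : G.E ⊆ G2.E) :
    ({e // e ∈ G.E} → L) × ({e // e ∈ G2.E \ G.E} → L) ≃ ({e // e ∈ G2.E} → L) where
  toFun fg := combine G G2 fg.1 fg.2
  invFun g := (fun e => g ⟨e.1, hs e.2⟩, fun e => g ⟨e.1, (Finset.mem_sdiff.mp e.2).1⟩)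
  left_inv := by
    rintro ⟨f, h⟩
    refine Prod.ext (funext fun e => ?_) (funext fun e => ?_)
    · simp only [combine, e.2, dif_pos]
    · have h2 := (Finset.mem_sdiff.mp e.2).2
      simp only [combine, h2, dif_neg, not_false_iff]
  right_inv := by
    intro g; funext x
    by_cases hx : x.1 ∈ G.E <;> simp [combine, hx]

lemma labProb_combine (p : L → ℝ) (G G2 : LGraph α L) (hs : G.E ⊆ G2.E)
    (f : {e // e ∈ G.E} → L) (h : {e // e ∈ G2.E \ G.E} → L) :
    labProb p G2 (combine G G2 f h) =
      labProb p G f * ∏ x : {e // e ∈ G2.E \ G.E}, p (h x) := by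
  classical
  set q : α × α → ℝ := fun e =>
    if he : e ∈ G.E then p (f ⟨e, he⟩)
    else if he2 : e ∈ G2.E \ G.E then p (h ⟨e, he2⟩) else 1 with hq
  have key : ∀ x : {e // e ∈ G2.E}, p (combine G G2 f h x) = q x.1 := by
    intro x
    by_cases hx : x.1 ∈ G.E
    · simp [combine, q, hx]
    · have hx2 : x.1 ∈ G2.E \ G.E := Finset.mem_sdiff.mpr ⟨x.2, hx⟩
      simp [combine, q, hx, hx2]
  have e1 : labProb p G2 (combine G G2 f h) = ∏ e ∈ G2.E, q e := by
    rw [labProb]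
    rw [show (Finset.univ : Finset {e // e ∈ G2.E}) = G2.E.attach from rfl]
    rw [Finset.prod_congr rfl (fun x _ => key x)]
    exact Finset.prod_attach G2.E q
  have e2 : ∏ e ∈ G2.E, q e = (∏ e ∈ G.E, q e) * ∏ e ∈ G2.E \ G.E, q e := by
    rw [← Finset.prod_union Finset.disjoint_sdiff, Finset.union_sdiff_of_subset hs]
  have e3 : ∏ e ∈ G.E, q e = labProb p G f := by
    rw [labProb, show (Finset.univ : Finset {e // e ∈ G.E}) = G.E.attach from rfl]
    rw [← Finset.prod_attach G.E q]
    refine Finset.prod_congr rfl fun x _ => ?_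
    simp [q, x.2]
  have e4 : ∏ e ∈ G2.E \ G.E, q e = ∏ x : {e // e ∈ G2.E \ G.E}, p (h x) := by
    rw [show (Finset.univ : Finset {e // e ∈ G2.E \ G.E}) = (G2.E \ G.E).attach from rfl]
    rw [← Finset.prod_attach (G2.E \ G.E) q]
    refine Finset.prod_congr rfl fun x _ => ?_
    have hx : x.1 ∉ G.E := (Finset.mem_sdiff.mp x.2).2
    simp only [q]
    rw [dif_neg hx, dif_pos x.2]
  rw [e1, e2, e3, e4]

lemma sum_prob_one [Fintype L] (p : L → ℝ) (hp1 : ∑ a, p a = 1)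
    {β : Type*} [Fintype β] [DecidableEq β] :
    ∑ h : β → L, ∏ x : β, p (h x) = 1 := by
  classical
  rw [← Fintype.piFinset_univ, ← Finset.prod_univ_sum (fun _ : β => (Finset.univ : Finset L)) (fun _ a => p a)]
  simp [hp1]

end Aux

/-- if `d` has at least one neighbor, the fixed-distribution expected
distinguishability strictly increases under duplication of `d`:
`∑_r P(G_r) 𝙳(G_r) < ∑_s P(G'_s) 𝙳(G'_s)` where `G' = 𝒟_d(G)`. -/
theorem stmt14 [DecidableEq α] [Fintype L] (G : LGraph α L) (d d' : α)
    (hd : d ∈ G.V) (hd' : d' ∉ G.V)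
    (hnbr : ∃ k, (d, k) ∈ G.E ∨ (k, d) ∈ G.E)
    (p : L → ℝ) (hp0 : ∀ a, 0 ≤ p a) (hp1 : ∑ a, p a = 1)
    (a b : L) (hab : a ≠ b) (hpa : 0 < p a) (hpb : 0 < p b) :
    ∑ f : {e // e ∈ G.E} → L, labProb p G f * (dnum (relabel G f) : ℝ) <
      ∑ g : {e // e ∈ (dup G d d').E} → L,
        labProb p (dup G d d') g * (dnum (relabel (dup G d d') g) : ℝ) := by
  classical
  have hs : G.E ⊆ (dup G d d').E := sub_dup G d d' hd'
  set G' := dup G d d' with hG'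
  -- pointwise monotonicity
  have hmono : ∀ (f : {e // e ∈ G.E} → L) (h : {e // e ∈ G'.E \ G.E} → L),
      dnum (relabel G f) ≤ dnum (relabel G' (combine G G' f h)) := by
    intro f h
    apply dnum_mono
    · show G.V ⊆ insert d' G.V
      exact Finset.subset_insert _ _
    · exact hs
    · intro e he
      have he' : e ∈ G'.E := hs he
      have heE : e ∈ G.E := he
      show (relabel G f).lab e.1 e.2 = (relabel G' (combine G G' f h)).lab e.1 e.2
      simp [relabel, combine, heE, he']
  -- rewriting the right-hand side
  have hR : ∑ g : {e // e ∈ G'.E} → L,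
        labProb p G' g * (dnum (relabel G' g) : ℝ)
      = ∑ x : ({e // e ∈ G.E} → L) × ({e // e ∈ G'.E \ G.E} → L),
          (labProb p G x.1 * ∏ y : {e // e ∈ G'.E \ G.E}, p (x.2 y)) *
            (dnum (relabel G' (combine G G' x.1 x.2)) : ℝ) := by
    rw [← Equiv.sum_comp (combineEquiv G G' hs)
        (fun g => labProb p G' g * (dnum (relabel G' g) : ℝ))]
    refine Finset.sum_congr rfl fun x _ => ?_
    have : (combineEquiv G G' hs) x = combine G G' x.1 x.2 := rfl
    rw [this, labProb_combine p G G' hs x.1 x.2]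
  -- rewriting the left-hand side
  have hQ1 : ∑ h : {e // e ∈ G'.E \ G.E} → L,
      ∏ y : {e // e ∈ G'.E \ G.E}, p (h y) = 1 := sum_prob_one p hp1
  have hL : ∑ f : {e // e ∈ G.E} → L,
        labProb p G f * (dnum (relabel G f) : ℝ)
      = ∑ x : ({e // e ∈ G.E} → L) × ({e // e ∈ G'.E \ G.E} → L),
          (labProb p G x.1 * ∏ y : {e // e ∈ G'.E \ G.E}, p (x.2 y)) *
            (dnum (relabel G x.1) : ℝ) := by
    rw [Fintype.sum_prod_type]
    refine Finset.sum_congr rfl fun f _ => ?_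
    have : ∑ h : {e // e ∈ G'.E \ G.E} → L,
        (labProb p G f * ∏ y, p (h y)) * (dnum (relabel G f) : ℝ)
        = (labProb p G f * (dnum (relabel G f) : ℝ)) *
            ∑ h : {e // e ∈ G'.E \ G.E} → L, ∏ y, p (h y) := by
      rw [Finset.mul_sum]
      exact Finset.sum_congr rfl fun h _ => by ring
    rw [this, hQ1, mul_one]
  rw [hL, hR]
  -- the strict-inequality witness
  obtain ⟨k, hk⟩ := hnbr
  have hdd' : d ≠ d' := fun h => hd' (h ▸ hd)
  set f₀ : {e // e ∈ G.E} → L := fun _ => a with hf₀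
  -- the dnum of the constant labeling is at most 1
  have hD1 : dnum (relabel G f₀) ≤ 1 := by
    refine csSup_le (distCards_nonempty _) ?_
    rintro n ⟨U, hU, rfl⟩
    rw [Finset.card_le_one]
    intro i hi j hj
    by_contra hij
    obtain ⟨kk, hkk⟩ := hU.2 i (by exact_mod_cast hi) j (by exact_mod_cast hj) hij
    rcases hkk with ⟨h1, h2, h3⟩ | ⟨h1, h2, h3⟩
    · have h1' : (i, kk) ∈ G.E := h1
      have h2' : (j, kk) ∈ G.E := h2
      exact h3 (by simp [relabel, h1', h2', hf₀])
    · have h1' : (kk, i) ∈ G.E := h1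
      have h2' : (kk, j) ∈ G.E := h2
      exact h3 (by simp [relabel, h1', h2', hf₀])
  -- new edge data, by cases on the direction of the neighbor edge
  have hwit : ∃ h₀ : {e // e ∈ G'.E \ G.E} → L,
      (∀ y, h₀ y = a ∨ h₀ y = b) ∧
        2 ≤ dnum (relabel G' (combine G G' f₀ h₀)) := by
    rcases hk with hkA | hkB
    · -- (d, k) ∈ G.E, new edge (d', k)
      have hkV : k ∈ G.V := (G.edge_mem _ hkA).2
      have hkd' : k ≠ d' := fun h => hd' (h ▸ hkV)
      have henG' : (d', k) ∈ G'.E := by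
        simp [hG', dup, Finset.mem_filter, Finset.mem_product, hkd', hkV, hkA]
      have henN : (d', k) ∉ G.E := fun h => hd' (G.edge_mem _ h).1
      have henS : (d', k) ∈ G'.E \ G.E := Finset.mem_sdiff.mpr ⟨henG', henN⟩
      refine ⟨fun y => if y.1 = (d', k) then b else a, fun y => ?_, ?_⟩
      · dsimp only; split <;> simp
      · set g₀ := combine G G' f₀ (fun y : {e // e ∈ G'.E \ G.E} =>
          if y.1 = (d', k) then b else a) with hg₀
        have labd : (relabel G' g₀).lab d k = a := by
          have hdk : (d, k) ∈ G'.E := hs hkA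
          simp [relabel, hdk, hg₀, combine, hkA, hf₀]
        have labd' : (relabel G' g₀).lab d' k = b := by
          simp [relabel, henG', hg₀, combine, henN]
        have hdist : Distinguishable (relabel G' g₀) d d' :=
          ⟨k, Or.inl ⟨hs hkA, henG', by rw [labd, labd']; exact hab⟩⟩
        have hdist' : Distinguishable (relabel G' g₀) d' d :=
          ⟨k, Or.inl ⟨henG', hs hkA, by rw [labd, labd']; exact hab.symm⟩⟩
        have hcard : ({d, d'} : Finset α).card = 2 := Finset.card_pair hdd'
        rw [← hcard]
        refine le_dnum _ _ ⟨?_, ?_⟩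
        · intro x hx
          simp only [Finset.coe_insert, Finset.coe_singleton, Set.mem_insert_iff,
            Set.mem_singleton_iff] at hx
          rcases hx with rfl | rfl
          · exact Finset.mem_insert_of_mem hd
          · exact Finset.mem_insert_self _ _
        · intro i hi j hj hij
          simp only [Finset.coe_insert, Finset.coe_singleton, Set.mem_insert_iff,
            Set.mem_singleton_iff] at hi hj
          rcases hi with rfl | rfl <;> rcases hj with rfl | rfl
          · exact absurd rfl hij
          · exact hdist
          · exact hdist'
          · exact absurd rfl hij
    · -- (k, d) ∈ G.E, new edge (k, d')
      have hkV : k ∈ G.V := (G.edge_mem _ hkB).1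
      have hkd' : k ≠ d' := fun h => hd' (h ▸ hkV)
      have henG' : (k, d') ∈ G'.E := by
        simp [hG', dup, Finset.mem_filter, Finset.mem_product, hkd', hkV, hkB]
      have henN : (k, d') ∉ G.E := fun h => hd' (G.edge_mem _ h).2
      have henS : (k, d') ∈ G'.E \ G.E := Finset.mem_sdiff.mpr ⟨henG', henN⟩
      refine ⟨fun y => if y.1 = (k, d') then b else a, fun y => ?_, ?_⟩
      · dsimp only; split <;> simp
      · set g₀ := combine G G' f₀ (fun y : {e // e ∈ G'.E \ G.E} =>
          if y.1 = (k, d') then b else a) with hg₀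
        have labd : (relabel G' g₀).lab k d = a := by
          have hdk : (k, d) ∈ G'.E := hs hkB
          simp [relabel, hdk, hg₀, combine, hkB, hf₀]
        have labd' : (relabel G' g₀).lab k d' = b := by
          simp [relabel, henG', hg₀, combine, henN]
        have hdist : Distinguishable (relabel G' g₀) d d' :=
          ⟨k, Or.inr ⟨hs hkB, henG', by rw [labd, labd']; exact hab⟩⟩
        have hdist' : Distinguishable (relabel G' g₀) d' d :=
          ⟨k, Or.inr ⟨henG', hs hkB, by rw [labd, labd']; exact hab.symm⟩⟩
        have hcard : ({d, d'} : Finset α).card = 2 := Finset.card_pair hdd'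
        rw [← hcard]
        refine le_dnum _ _ ⟨?_, ?_⟩
        · intro x hx
          simp only [Finset.coe_insert, Finset.coe_singleton, Set.mem_insert_iff,
            Set.mem_singleton_iff] at hx
          rcases hx with rfl | rfl
          · exact Finset.mem_insert_of_mem hd
          · exact Finset.mem_insert_self _ _
        · intro i hi j hj hij
          simp only [Finset.coe_insert, Finset.coe_singleton, Set.mem_insert_iff,
            Set.mem_singleton_iff] at hi hj
          rcases hi with rfl | rfl <;> rcases hj with rfl | rfl
          · exact absurd rfl hij
          · exact hdist
          · exact hdist'
          · exact absurd rfl hij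
  obtain ⟨h₀, h₀ab, hD2⟩ := hwit
  -- positivity of the weight of the witness
  have hP0 : 0 < labProb p G f₀ := Finset.prod_pos fun x _ => hpa
  have hQ0 : 0 < ∏ y : {e // e ∈ G'.E \ G.E}, p (h₀ y) :=
    Finset.prod_pos fun y _ => by rcases h₀ab y with h | h <;> rw [h]
      <;> [exact hpa; exact hpb]
  -- conclude with a strict sum comparison
  refine Finset.sum_lt_sum (fun x _ => ?_) ⟨(f₀, h₀), Finset.mem_univ _, ?_⟩
  · refine mul_le_mul_of_nonneg_left ?_ ?_
    · exact_mod_cast Nat.cast_le.mpr (hmono x.1 x.2)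
    · exact mul_nonneg (Finset.prod_nonneg fun _ _ => hp0 _)
        (Finset.prod_nonneg fun _ _ => hp0 _)
  · refine mul_lt_mul_of_pos_left ?_ (mul_pos hP0 hQ0)
    exact_mod_cast Nat.cast_lt.mpr
      (lt_of_le_of_lt hD1 (lt_of_lt_of_le one_lt_two hD2))

end GeneDup
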